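/- Let G1 ∗_T G2 be a tree amalgamation of connected graphs whose identification sizes are bounded, i.e., there is N ∈ ℕ such that every vertex of G1 ∗_T G2 has identification size at most N. Then the canonical contraction map ψ: V(G1 + G2) → V(G1 ∗_T G2) is a quasi-isometry whose constants depend only on N. -/

import Mathlib

open SimpleGraph

universe u v

/-! ### Quasi-isometries -/

/-- `f` is a `(γ, c)`-quasi-isometry from `G` to `H`. -/
def IsQIWith {V : Type u} {W : Type v} (G : SimpleGraph V) (H : SimpleGraph W)
    (γ c : ℝ) (f : V → W) : Prop :=
  (∀ u v : V, γ⁻¹ * (G.dist u v : ℝ) - c ≤ (H.dist (f u) (f v) : ℝ) ∧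
      (H.dist (f u) (f v) : ℝ) ≤ γ * (G.dist u v : ℝ) + c) ∧
  ∀ w : W, ∃ x : V, (H.dist w (f x) : ℝ) ≤ c

/-- `G` and `H` are quasi-isometric. -/
def QuasiIsometric {V : Type u} {W : Type v} (G : SimpleGraph V) (H : SimpleGraph W) : Prop :=
  ∃ (γ c : ℝ) (f : V → W), 1 ≤ γ ∧ 0 ≤ c ∧ IsQIWith G H γ c f

/-- `H` embeds quasi-isometrically into `G`. -/
def QIEmbeds {V : Type u} {W : Type v} (H : SimpleGraph V) (G : SimpleGraph W) : Prop :=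
  ∃ (γ c : ℝ) (f : V → W), 1 ≤ γ ∧ 0 ≤ c ∧
    ∀ u v : V, γ⁻¹ * (H.dist u v : ℝ) - c ≤ (G.dist (f u) (f v) : ℝ) ∧
      (G.dist (f u) (f v) : ℝ) ≤ γ * (H.dist u v : ℝ) + c

/-! ### Basic graph properties -/

/-- Every vertex has finite degree. -/
def LocallyFiniteGraph {V : Type u} (G : SimpleGraph V) : Prop :=
  ∀ v : V, (G.neighborSet v).Finite

/-- The automorphism group of `G` has finitely many orbits on the vertex set. -/
def QuasiTransitive {V : Type u} (G : SimpleGraph V) : Prop :=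
  ∃ s : Set V, s.Finite ∧ ∀ v : V, ∃ u ∈ s, ∃ g : G ≃g G, g u = v

/-- The automorphism group of `G` acts transitively on the vertex set. -/
def VertexTransitive {V : Type u} (G : SimpleGraph V) : Prop :=
  ∀ u v : V, ∃ g : G ≃g G, g u = v

/-- `G` has exactly one end. -/
def OneEnded {V : Type u} (G : SimpleGraph V) : Prop :=
  Nonempty G.end ∧ Subsingleton G.end

/-- `G` and `H` have the same number of ends (in the sense `0, 1, 2, …, ∞`). -/
def SameNumberOfEnds {V : Type u} {W : Type v} (G : SimpleGraph V) (H : SimpleGraph W) : Prop :=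
  (Infinite G.end ∧ Infinite H.end) ∨
    (Finite G.end ∧ Finite H.end ∧ Nat.card G.end = Nat.card H.end)

/-- There is `n : ℕ` such that every two distinct ends of `G` can be separated by removing
at most `n` vertices. -/
def Accessible {V : Type u} (G : SimpleGraph V) : Prop :=
  ∃ n : ℕ, ∀ e e' : G.end, e ≠ e' →
    ∃ K : Finset V, K.card ≤ n ∧ e.val (Opposite.op K) ≠ e'.val (Opposite.op K)

/-- `T` is a tree all of whose vertices have degree `3`. -/
def CubicTree {W : Type u} (T : SimpleGraph W) : Prop :=
  T.IsTree ∧ ∀ v : W, (T.neighborSet v).ncard = 3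

/-! ### Tree amalgamations -/

/-- The bipartite graph on `VT1 ⊕ VT2` given by the relation `R`. -/
def bipGraph {VT1 VT2 : Type u} (R : VT1 → VT2 → Prop) : SimpleGraph (VT1 ⊕ VT2) :=
  SimpleGraph.fromRel fun x y =>
    match x, y with
    | Sum.inl a, Sum.inr b => R a b
    | _, _ => False

/-- All the data of a tree amalgamation `G1 ∗_T G2`: a semiregular tree (given by its
bipartition classes `VT1`, `VT2` and the adjacency relation `Tadj`), a labelling of the
edges of the tree by pairs of indices from `K1 × K2` such that the labels at each vertex of
`VTi` biject with `Ki` in the `i`-th coordinate, families of adhesion sets `S1`, `S2`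
(all of the same cardinality), and the gluing bijections `glue k l : S1 k → S2 l`. -/
structure TreeAmalgData {V1 V2 : Type u} (G1 : SimpleGraph V1) (G2 : SimpleGraph V2) :
    Type (u + 1) where
  VT1 : Type u
  VT2 : Type u
  K1 : Type u
  K2 : Type u
  Tadj : VT1 → VT2 → Prop
  isTree : (bipGraph Tadj).IsTree
  lab1 : ∀ a b, Tadj a b → K1
  lab2 : ∀ a b, Tadj a b → K2
  lab1_bij : ∀ a : VT1, Function.Bijective fun b : {b : VT2 // Tadj a b} => lab1 a b.1 b.2
  lab2_bij : ∀ b : VT2, Function.Bijective fun a : {a : VT1 // Tadj a b} => lab2 a.1 b a.2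
  S1 : K1 → Set V1
  S2 : K2 → Set V2
  S1_nonempty : ∀ k, (S1 k).Nonempty
  glue : K1 → K2 → V1 → V2
  glue_bij : ∀ k l, Set.BijOn (glue k l) (S1 k) (S2 l)

namespace TreeAmalgData

variable {V1 V2 : Type u} {G1 : SimpleGraph V1} {G2 : SimpleGraph V2}

/-- The vertex set of the graph `G1 + G2`. -/
abbrev PlusV (D : TreeAmalgData G1 G2) : Type u := (D.VT1 × V1) ⊕ (D.VT2 × V2)

/-- The relation describing the edges added between the copies `G1^u` and `G2^v`. -/
def cross (D : TreeAmalgData G1 G2) (p : D.VT1 × V1) (q : D.VT2 × V2) : Prop :=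
  ∃ h : D.Tadj p.1 q.1, p.2 ∈ D.S1 (D.lab1 p.1 q.1 h) ∧
    q.2 = D.glue (D.lab1 p.1 q.1 h) (D.lab2 p.1 q.1 h) p.2

def plusRel (D : TreeAmalgData G1 G2) : D.PlusV → D.PlusV → Prop
  | Sum.inl p, Sum.inl p' => p.1 = p'.1 ∧ G1.Adj p.2 p'.2
  | Sum.inr q, Sum.inr q' => q.1 = q'.1 ∧ G2.Adj q.2 q'.2
  | Sum.inl p, Sum.inr q => D.cross p q
  | Sum.inr _, Sum.inl _ => False

/-- The graph `G1 + G2`: disjoint copies of `G1` and `G2` along the tree, together with the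
added matching edges between adhesion sets. -/
def plusGraph (D : TreeAmalgData G1 G2) : SimpleGraph D.PlusV :=
  SimpleGraph.fromRel D.plusRel

/-- The relation identifying the endpoints of the added edges (which get contracted). -/
def idRel (D : TreeAmalgData G1 G2) : D.PlusV → D.PlusV → Prop :=
  fun x y => ∃ p q, x = Sum.inl p ∧ y = Sum.inr q ∧ D.cross p q

/-- Vertex set of the tree amalgamation `G1 ∗_T G2`. -/
abbrev AmalgV (D : TreeAmalgData G1 G2) : Type u := Quot D.idRel

/-- The canonical contraction map `ψ : V(G1 + G2) → V(G1 ∗_T G2)`. -/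
def toAmalg (D : TreeAmalgData G1 G2) : D.PlusV → D.AmalgV := Quot.mk _

/-- The tree amalgamation `G1 ∗_T G2`, obtained from `G1 + G2` by contracting all the
added edges. -/
def amalgGraph (D : TreeAmalgData G1 G2) : SimpleGraph D.AmalgV :=
  SimpleGraph.fromRel fun x y =>
    ∃ a b, x = D.toAmalg a ∧ y = D.toAmalg b ∧ D.plusGraph.Adj a b

/-- The tree vertex at which a vertex of `G1 + G2` lives. -/
def site (D : TreeAmalgData G1 G2) : D.PlusV → D.VT1 ⊕ D.VT2
  | Sum.inl p => Sum.inl p.1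
  | Sum.inr q => Sum.inr q.1

/-- The set of tree vertices hosting representatives of `x`; the identification size of `x`
is the number of its elements. -/
def support (D : TreeAmalgData G1 G2) (x : D.AmalgV) : Set (D.VT1 ⊕ D.VT2) :=
  {t | ∃ p, D.toAmalg p = x ∧ D.site p = t}

/-- Every vertex of `G1 ∗_T G2` has finite identification size. -/
def FiniteIdentification (D : TreeAmalgData G1 G2) : Prop :=
  ∀ x : D.AmalgV, (D.support x).Finite

/-- All adhesion sets are finite. -/
def FiniteAdhesion (D : TreeAmalgData G1 G2) : Prop :=
  (∀ k, (D.S1 k).Finite) ∧ ∀ l, (D.S2 l).Finite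

/-- The tree amalgamation is trivial: the contraction map restricts to a bijection on some
copy of `G1` or of `G2`. -/
def IsTrivial (D : TreeAmalgData G1 G2) : Prop :=
  (∃ a : D.VT1, Function.Bijective fun x : V1 => D.toAmalg (Sum.inl (a, x))) ∨
  ∃ b : D.VT2, Function.Bijective fun y : V2 => D.toAmalg (Sum.inr (b, y))

end TreeAmalgData

/-- Some group of automorphisms of `G` acts with finitely many orbits on the vertices of `G`
and with finitely many orbits on the family `S` of adhesion sets of `G`. -/
def GoodAction {V : Type u} (G : SimpleGraph V) {K : Type u} (S : K → Set V) : Prop :=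
  ∃ Γ : Subgroup (G ≃g G),
    (∃ s : Set V, s.Finite ∧ ∀ v : V, ∃ u ∈ s, ∃ g ∈ Γ, g u = v) ∧
    ∃ I : Set K, I.Finite ∧ ∀ k : K, ∃ k' ∈ I, ∃ g ∈ Γ, ⇑g '' S k' = S k

/-- A bundled graph. -/
structure BGraph : Type (u + 1) where
  V : Type u
  G : SimpleGraph V

/-- `Z` is (isomorphic to) a tree amalgamation of `X` and `Y` of finite adhesion and finite
identification. -/
def AmalgStep (X Y Z : BGraph.{u}) : Prop :=
  ∃ D : TreeAmalgData X.G Y.G,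
    D.FiniteAdhesion ∧ D.FiniteIdentification ∧ Nonempty (Z.G ≃g D.amalgGraph)

/-- `Z` is (isomorphic to) a tree amalgamation of `X` and `Y` of finite adhesion and finite
identification such that some group of automorphisms of each factor acts with finitely many
orbits on that factor and on the set of its adhesion sets. -/
def GoodAmalgStep (X Y Z : BGraph.{u}) : Prop :=
  ∃ D : TreeAmalgData X.G Y.G,
    D.FiniteAdhesion ∧ D.FiniteIdentification ∧
    GoodAction X.G D.S1 ∧ GoodAction Y.G D.S2 ∧ Nonempty (Z.G ≃g D.amalgGraph)

/-- `Z` is obtained from the list `l` of graphs by iterated tree amalgamations of finite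
adhesion and finite identification. -/
inductive IterAmalg : BGraph.{u} → List BGraph.{u} → Prop
  | single (X : BGraph) : IterAmalg X [X]
  | step {X Y Z : BGraph} {l1 l2 : List BGraph} :
      IterAmalg X l1 → IterAmalg Y l2 → AmalgStep X Y Z → IterAmalg Z (l1 ++ l2)

/-- `Z` is obtained from the list `l` of graphs by iterated tree amalgamations of finite
adhesion and finite identification with quasi-transitive actions on the factors and their
adhesion sets. -/
inductive GoodIterAmalg : BGraph.{u} → List BGraph.{u} → Prop
  | single (X : BGraph) : GoodIterAmalg X [X]
  | step {X Y Z : BGraph} {l1 l2 : List BGraph} :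
      GoodIterAmalg X l1 → GoodIterAmalg Y l2 → GoodAmalgStep X Y Z →
        GoodIterAmalg Z (l1 ++ l2)

/-- `l` is a factorisation of the graph `Gb`. -/
def IsFactorisation (Gb : BGraph.{u}) (l : List BGraph.{u}) : Prop :=
  (∀ X ∈ l, X.G.Connected ∧ LocallyFiniteGraph X.G ∧ QuasiTransitive X.G) ∧
    GoodIterAmalg Gb l

/-- A factorisation is terminal if every factor has at most one end. -/
def IsTerminal (l : List BGraph.{u}) : Prop := ∀ X ∈ l, Subsingleton X.G.end


/-! ### Auxiliary lemmas -/

section Tree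
variable {W : Type u} {T : SimpleGraph W}

lemma walk_parity (side : W → Bool) (hside : ∀ {a b : W}, T.Adj a b → side a ≠ side b) :
    ∀ {s t : W} (w : T.Walk s t), (side s = side t ↔ Even w.length) := by
  intro s t w
  induction w with
  | nil => simp
  | @cons a b c h p ih =>
    have hab := hside h
    simp only [Walk.length_cons, Nat.even_add_one, ← ih]
    cases hsa : side a <;> cases hsb : side b <;> cases hsc : side c <;> simp_all

lemma tree_dist_ne (hT : T.Connected) (side : W → Bool)
    (hside : ∀ {a b : W}, T.Adj a b → side a ≠ side b)
    {s t : W} (h : T.Adj s t) (r : W) : T.dist r s ≠ T.dist r t := by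
  intro heq
  obtain ⟨w1, hw1⟩ := hT.exists_walk_length_eq_dist r s
  obtain ⟨w2, hw2⟩ := hT.exists_walk_length_eq_dist r t
  have h1 := walk_parity side hside w1
  have h2 := walk_parity side hside w2
  rw [hw1, heq] at h1
  rw [hw2] at h2
  have : side s = side t := by
    have hst := hside h
    cases hra : side r <;> cases hsa : side s <;> cases hta : side t <;>
      simp_all [Nat.not_even_iff_odd, (Nat.even_or_odd _).resolve_left,
        (Nat.even_or_odd _).resolve_right] <;>
      exact (Nat.not_odd_iff_even.mpr h2) h1
  exact hside h this

lemma geodesic_path (hT : T.Connected) (t r : W) :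
    ∃ p : T.Walk t r, p.IsPath ∧ p.length = T.dist t r := by
  classical
  obtain ⟨w, hw⟩ := hT.exists_walk_length_eq_dist t r
  exact ⟨w.bypass, w.bypass_isPath,
    le_antisymm (hw ▸ w.length_bypass_le) (SimpleGraph.dist_le _)⟩

lemma tree_parent_path (hT : T.IsTree) {r s t : W} (h1 : T.Adj s t)
    (hd1 : T.dist r t + 1 = T.dist r s) :
    ∃ p : T.Walk t r, (Walk.cons h1 p).IsPath := by
  classical
  obtain ⟨p, hp, hl⟩ := geodesic_path hT.isConnected t r
  refine ⟨p, hp.cons ?_⟩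
  intro hs
  have hle : T.dist s r ≤ (p.dropUntil s hs).length := SimpleGraph.dist_le _
  have hle2 : (p.dropUntil s hs).length ≤ p.length := Walk.length_dropUntil_le p hs
  rw [hl] at hle2
  have : T.dist s r = T.dist t r + 1 := by
    rw [SimpleGraph.dist_comm (u := s) (v := r), SimpleGraph.dist_comm (u := t) (v := r), ← hd1]
  omega

lemma tree_unique_parent (hT : T.IsTree) {r s t t' : W} (h1 : T.Adj s t) (h2 : T.Adj s t')
    (hd1 : T.dist r t + 1 = T.dist r s) (hd2 : T.dist r t' + 1 = T.dist r s) : t = t' := by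
  obtain ⟨p1, hp1⟩ := tree_parent_path hT h1 hd1
  obtain ⟨p2, hp2⟩ := tree_parent_path hT h2 hd2
  obtain ⟨p, -, hu⟩ := hT.existsUnique_path s r
  have heq : Walk.cons h1 p1 = Walk.cons h2 p2 := (hu _ hp1).trans (hu _ hp2).symm
  have := congrArg (fun q : T.Walk s r => q.getVert 1) heq
  simpa [Walk.getVert_cons_succ] using this

end Tree


namespace TreeAmalgData

variable {V1 V2 : Type u} {G1 : SimpleGraph V1} {G2 : SimpleGraph V2} (D : TreeAmalgData G1 G2)

/-- Symmetrisation of the identification relation. -/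
def symRel (x y : D.PlusV) : Prop := D.idRel x y ∨ D.idRel y x

lemma symRel_toAmalg {x y : D.PlusV} (h : D.symRel x y) : D.toAmalg x = D.toAmalg y := by
  cases h with
  | inl h => exact Quot.sound h
  | inr h => exact (Quot.sound h).symm

lemma cross_det_right {p : D.VT1 × V1} {q q' : D.VT2 × V2} (h : D.cross p q) (h' : D.cross p q')
    (hq : q.1 = q'.1) : q = q' := by
  obtain ⟨b, w⟩ := q
  obtain ⟨b', w'⟩ := q'
  obtain rfl : b = b' := hq
  obtain ⟨h1, hm, he⟩ := h
  obtain ⟨h1', hm', he'⟩ := h'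
  exact Prod.ext rfl (he.trans he'.symm)

lemma cross_det_left {p p' : D.VT1 × V1} {q : D.VT2 × V2} (h : D.cross p q) (h' : D.cross p' q)
    (hp : p.1 = p'.1) : p = p' := by
  obtain ⟨a, x⟩ := p
  obtain ⟨a', x'⟩ := p'
  obtain rfl : a = a' := hp
  obtain ⟨h1, hm, he⟩ := h
  obtain ⟨h1', hm', he'⟩ := h'
  refine Prod.ext rfl ?_
  exact (D.glue_bij (D.lab1 a q.1 h1) (D.lab2 a q.1 h1)).injOn hm hm' (he.symm.trans he')

lemma peak {a b c : D.PlusV} (h1 : D.symRel a b) (h2 : D.symRel b c)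
    (hs : D.site a = D.site c) : a = c := by
  rcases h1 with ⟨p, q, rfl, rfl, hc1⟩ | ⟨p, q, rfl, rfl, hc1⟩
  · rcases h2 with ⟨p', q', h', _, _⟩ | ⟨p', q', rfl, h', hc2⟩
    · exact absurd h' (by simp)
    · obtain rfl : q' = q := by injection h'.symm
      obtain rfl : p = p' := D.cross_det_left hc1 hc2 (by injection hs)
      rfl
  · rcases h2 with ⟨p', q', h', rfl, hc2⟩ | ⟨p', q', _, h', _⟩
    · obtain rfl : p' = p := by injection h'.symm
      obtain rfl : q = q' := D.cross_det_right hc1 hc2 (by injection hs)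
      rfl
    · exact absurd h' (by simp)

lemma symRel_adj {x y : D.PlusV} (h : D.symRel x y) : D.plusGraph.Adj x y := by
  rcases h with ⟨p, q, rfl, rfl, hc⟩ | ⟨p, q, rfl, rfl, hc⟩
  · rw [plusGraph, SimpleGraph.fromRel_adj]
    exact ⟨by simp, Or.inl hc⟩
  · rw [plusGraph, SimpleGraph.fromRel_adj]
    exact ⟨by simp, Or.inr hc⟩

lemma bip_adj_inl_inr {a : D.VT1} {b : D.VT2} (h : D.Tadj a b) :
    (bipGraph D.Tadj).Adj (Sum.inl a) (Sum.inr b) := by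
  rw [bipGraph, SimpleGraph.fromRel_adj]
  exact ⟨by simp, Or.inl h⟩

lemma bip_adj_cases {s t : D.VT1 ⊕ D.VT2} (h : (bipGraph D.Tadj).Adj s t) :
    (∃ a b, s = Sum.inl a ∧ t = Sum.inr b ∧ D.Tadj a b) ∨
    (∃ a b, s = Sum.inr b ∧ t = Sum.inl a ∧ D.Tadj a b) := by
  rw [bipGraph, SimpleGraph.fromRel_adj] at h
  obtain ⟨-, h | h⟩ := h
  · cases s with
    | inl a =>
      cases t with
      | inl a' => exact absurd h (by simp)
      | inr b => exact Or.inl ⟨a, b, rfl, rfl, h⟩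
    | inr b =>
      cases t <;> exact absurd h (by simp)
  · cases t with
    | inl a =>
      cases s with
      | inl a' => exact absurd h (by simp)
      | inr b => exact Or.inr ⟨a, b, rfl, rfl, h⟩
    | inr b =>
      cases s <;> exact absurd h (by simp)

lemma bip_side_flip {s t : D.VT1 ⊕ D.VT2} (h : (bipGraph D.Tadj).Adj s t) :
    Sum.isLeft s ≠ Sum.isLeft t := by
  rcases D.bip_adj_cases h with ⟨a, b, rfl, rfl, -⟩ | ⟨a, b, rfl, rfl, -⟩ <;> simp

lemma symRel_site_adj {x y : D.PlusV} (h : D.symRel x y) :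
    (bipGraph D.Tadj).Adj (D.site x) (D.site y) := by
  rcases h with ⟨p, q, rfl, rfl, hc⟩ | ⟨p, q, rfl, rfl, hc⟩
  · exact D.bip_adj_inl_inr hc.1
  · exact (D.bip_adj_inl_inr hc.1).symm

lemma reach_same_site_1 (hc1 : G1.Connected) (a : D.VT1) (x y : V1) :
    D.plusGraph.Reachable (Sum.inl (a, x)) (Sum.inl (a, y)) := by
  obtain ⟨w⟩ := hc1 x y
  induction w with
  | nil => exact Reachable.refl _
  | @cons u m y h p ih =>
    refine Reachable.trans (Adj.reachable ?_) ih
    rw [plusGraph, SimpleGraph.fromRel_adj]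
    exact ⟨by simp [h.ne], Or.inl ⟨rfl, h⟩⟩

lemma reach_same_site_2 (hc2 : G2.Connected) (b : D.VT2) (x y : V2) :
    D.plusGraph.Reachable (Sum.inr (b, x)) (Sum.inr (b, y)) := by
  obtain ⟨w⟩ := hc2 x y
  induction w with
  | nil => exact Reachable.refl _
  | @cons u m y h p ih =>
    refine Reachable.trans (Adj.reachable ?_) ih
    rw [plusGraph, SimpleGraph.fromRel_adj]
    exact ⟨by simp [h.ne], Or.inl ⟨rfl, h⟩⟩

lemma cross_edge {a : D.VT1} {b : D.VT2} (h : D.Tadj a b) :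
    ∃ x y, D.plusGraph.Adj (Sum.inl (a, x)) (Sum.inr (b, y)) ∧
      D.cross (a, x) (b, y) := by
  obtain ⟨x, hx⟩ := D.S1_nonempty (D.lab1 a b h)
  refine ⟨x, D.glue (D.lab1 a b h) (D.lab2 a b h) x, ?_, h, hx, rfl⟩
  rw [plusGraph, SimpleGraph.fromRel_adj]
  exact ⟨by simp, Or.inl ⟨h, hx, rfl⟩⟩

lemma reach_of_sitewalk (hc1 : G1.Connected) (hc2 : G2.Connected) :
    ∀ {s t : D.VT1 ⊕ D.VT2} (w : (bipGraph D.Tadj).Walk s t)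
      (p q : D.PlusV), D.site p = s → D.site q = t → D.plusGraph.Reachable p q := by
  intro s t w
  induction w with
  | @nil s =>
    intro p q hp hq
    subst hp
    cases p with
    | inl pp =>
      cases q with
      | inl qq =>
        obtain ⟨a, x⟩ := pp
        obtain ⟨a', y⟩ := qq
        obtain rfl : a = a' := by injection hq.symm
        exact D.reach_same_site_1 hc1 a x y
      | inr qq => exact absurd hq (by simp [site])
    | inr pp =>
      cases q with
      | inl qq => exact absurd hq (by simp [site])
      | inr qq =>
        obtain ⟨b, x⟩ := pp
        obtain ⟨b', y⟩ := qq
        obtain rfl : b = b' := by injection hq.symm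
        exact D.reach_same_site_2 hc2 b x y
  | @cons s m t hadj w ih =>
    intro p q hp hq
    rcases D.bip_adj_cases hadj with ⟨a, b, rfl, rfl, hT⟩ | ⟨a, b, rfl, rfl, hT⟩
    · obtain ⟨x, y, he, -⟩ := D.cross_edge hT
      have h1 : D.plusGraph.Reachable p (Sum.inl (a, x)) := by
        cases p with
        | inl pp =>
          obtain ⟨a', z⟩ := pp
          obtain rfl : a' = a := by injection hp
          exact D.reach_same_site_1 hc1 _ _ _
        | inr pp => exact absurd hp (by simp [site])
      exact (h1.trans he.reachable).trans (ih (Sum.inr (b, y)) q rfl hq)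
    · obtain ⟨x, y, he, -⟩ := D.cross_edge hT
      have h1 : D.plusGraph.Reachable p (Sum.inr (b, y)) := by
        cases p with
        | inl pp => exact absurd hp (by simp [site])
        | inr pp =>
          obtain ⟨b', z⟩ := pp
          obtain rfl : b' = b := by injection hp
          exact D.reach_same_site_2 hc2 _ _ _
      exact (h1.trans he.symm.reachable).trans (ih (Sum.inl (a, x)) q rfl hq)

lemma plus_connected (hc1 : G1.Connected) (hc2 : G2.Connected) :
    D.plusGraph.Connected := by
  rw [SimpleGraph.connected_iff]
  constructor
  · intro p q
    obtain ⟨w⟩ := D.isTree.isConnected (D.site p) (D.site q)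
    exact D.reach_of_sitewalk hc1 hc2 w p q rfl rfl
  · obtain ⟨s⟩ := D.isTree.isConnected.nonempty
    cases s with
    | inl a => exact ⟨Sum.inl (a, hc1.nonempty.some)⟩
    | inr b => exact ⟨Sum.inr (b, hc2.nonempty.some)⟩

lemma dist_le_chain (hconn : D.plusGraph.Connected) :
    ∀ (l : List D.PlusV) (u v : D.PlusV), List.Chain D.symRel u l →
      (u :: l).getLast (List.cons_ne_nil _ _) = v → D.plusGraph.dist u v ≤ l.length := by
  intro l
  induction l with
  | nil =>
    intro u v _ hlast
    simp only [List.getLast_singleton] at hlast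
    subst hlast
    simp
  | cons z rest ih =>
    intro u v hch hlast
    simp only [List.Chain, List.chain_cons] at hch
    obtain ⟨h1, h2⟩ := hch
    rw [List.getLast_cons_cons] at hlast
    have hz : D.plusGraph.dist z v ≤ rest.length := ih z v h2 hlast
    have huz : D.plusGraph.dist u z = 1 :=
      SimpleGraph.dist_eq_one_iff_adj.mpr (D.symRel_adj h1)
    calc D.plusGraph.dist u v ≤ D.plusGraph.dist u z + D.plusGraph.dist z v :=
          hconn.dist_triangle
      _ ≤ (z :: rest).length := by simp [huz]; omega


lemma amalgGraph_eq : D.amalgGraph = SimpleGraph.fromRel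
    (fun x y => ∃ a b, x = D.toAmalg a ∧ y = D.toAmalg b ∧ D.plusGraph.Adj a b) := rfl

lemma amalg_adj_of {a b : D.PlusV} (hne : D.toAmalg a ≠ D.toAmalg b)
    (h : D.plusGraph.Adj a b) : D.amalgGraph.Adj (D.toAmalg a) (D.toAmalg b) := by
  rw [amalgGraph_eq, SimpleGraph.fromRel_adj]
  exact ⟨hne, Or.inl ⟨a, b, rfl, rfl, h⟩⟩

lemma amalg_adj_cases {x y : D.AmalgV} (h : D.amalgGraph.Adj x y) :
    x ≠ y ∧ ((∃ a b, x = D.toAmalg a ∧ y = D.toAmalg b ∧ D.plusGraph.Adj a b) ∨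
      (∃ a b, y = D.toAmalg a ∧ x = D.toAmalg b ∧ D.plusGraph.Adj a b)) := by
  rw [amalgGraph_eq, SimpleGraph.fromRel_adj] at h
  exact h

lemma chain_toAmalg_eq :
    ∀ (l : List D.PlusV) (u : D.PlusV), List.Chain D.symRel u l →
      ∀ z ∈ u :: l, D.toAmalg z = D.toAmalg u := by
  intro l
  induction l with
  | nil =>
    intro u _ z hz
    simp only [List.mem_singleton] at hz
    subst hz; rfl
  | cons w rest ih =>
    intro u hch z hz
    simp only [List.Chain, List.chain_cons] at hch
    rcases List.mem_cons.mp hz with rfl | hz'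
    · rfl
    · exact (ih w hch.2 z hz').trans (D.symRel_toAmalg hch.1).symm

lemma dist_le_of_chain_bound (hc1 : G1.Connected) (hc2 : G2.Connected) (N : ℕ)
    (hN : ∀ x : D.AmalgV, (D.support x).Finite ∧ (D.support x).ncard ≤ N) :
    ∀ (n : ℕ) (l : List D.PlusV) (u v : D.PlusV), l.length = n →
      List.Chain D.symRel u l → (u :: l).getLast (List.cons_ne_nil _ _) = v →
      D.plusGraph.dist u v ≤ N := by
  have hconn := D.plus_connected hc1 hc2
  have hTconn := D.isTree.isConnected
  intro n
  induction n using Nat.strong_induction_on with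
  | _ n ihn =>
  intro l u v hlen hch hlast
  set L := u :: l with hLdef
  have hch' : List.Chain' D.symRel L := hch
  have hLlen : L.length = n + 1 := by simp [hLdef, hlen]
  have hstep : ∀ i (h : i + 1 < L.length), D.symRel (L[i]'(by omega)) (L[i+1]'h) := by
    intro i h
    have := List.isChain_iff_getElem.mp hch' i (by omega)
    simpa [List.get_eq_getElem] using this
  by_cases hpk : ∃ i, ∃ h : i + 2 < L.length,
      D.site (L[i]'(by omega)) = D.site (L[i+2]'h)
  · obtain ⟨i, hi, hs⟩ := hpk
    have heq : L[i]'(by omega) = L[i+2]'hi :=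
      D.peak (hstep i (by omega)) (hstep (i+1) (by omega)) hs
    have hn2 : 2 ≤ n := by omega
    set L2 := L.take (i+1) ++ L.drop (i+3) with hL2def
    have hL2len : L2.length = n - 1 := by
      simp only [hL2def, List.length_append, List.length_take, List.length_drop]
      omega
    have hlo : ∀ j, j ≤ i → ∀ (hj2 : j < L2.length), L2[j]'hj2 = L[j]'(by omega) := by
      intro j hj hj2
      simp only [hL2def]
      rw [List.getElem_append_left (by simp only [List.length_take]; omega)]
      simp
    have hhik : ∀ k (hk : i+1+k < L2.length), L2[i+1+k]'hk = L[i+3+k]'(by omega) := by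
      intro k hk
      simp only [hL2def]
      rw [List.getElem_append_right (by simp only [List.length_take]; omega)]
      have hlt : i + 1 ≤ L.length := by omega
      simp only [List.length_take, Nat.min_eq_left (by omega : i + 1 ≤ L.length)]
      rw [List.getElem_drop]
      congr 1
      omega
    have hhi : ∀ j, i + 1 ≤ j → ∀ (hj2 : j < L2.length), L2[j]'hj2 = L[j+2]'(by omega) := by
      intro j hj hj2
      obtain ⟨k, rfl⟩ := Nat.exists_eq_add_of_le hj
      rw [hhik k hj2]
      congr 1
      omega
    have hch2 : List.Chain' D.symRel L2 := by
      rw [List.Chain', List.isChain_iff_getElem]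
      intro j hj
      rcases lt_trichotomy j i with hji | rfl | hji
      · rw [hlo j (by omega) (by omega), hlo (j+1) (by omega) (by omega)]
        exact hstep j (by omega)
      · rw [hlo j (by omega) (by omega), hhi (j+1) (by omega) (by omega)]
        rw [heq]
        exact hstep (j+2) (by omega)
      · rw [hhi j (by omega) (by omega), hhi (j+1) (by omega) (by omega)]
        exact hstep (j+2) (by omega)
    have hL2ne : L2 ≠ [] := by
      intro h
      rw [h] at hL2len
      simp at hL2len
      omega
    obtain ⟨u2, l2, hL2cons⟩ := List.exists_cons_of_ne_nil hL2ne
    have hu2 : u = u2 := by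
      have h0 : L2[0]'(by rw [hL2len]; omega) = L[0]'(by omega) := hlo 0 (by omega) _
      simp only [hL2cons] at h0
      simpa [hLdef] using h0.symm
    subst hu2
    have hl2len : l2.length = n - 2 := by
      have := hL2len
      simp only [hL2cons] at this
      simp at this
      omega
    have hlastL : L[L.length - 1]'(by omega) = v := by
      rw [← List.getLast_eq_getElem]
      exact hlast
    have hlast2' : L2.getLast hL2ne = v := by
      rw [List.getLast_eq_getElem]
      rcases Nat.lt_or_ge (L2.length - 1) (i + 1) with hcase | hcase
      · have hieq : L2.length - 1 = i := by omega
        simp only [hieq]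
        rw [hlo i (by omega) (by omega), heq]
        have h2 : i + 2 = L.length - 1 := by omega
        simp only [h2]
        exact hlastL
      · rw [hhi (L2.length - 1) (by omega) (by omega)]
        have h3 : L2.length - 1 + 2 = L.length - 1 := by omega
        simp only [h3]
        exact hlastL
    have hlast2 : (u :: l2).getLast (List.cons_ne_nil _ _) = v := by
      have := hlast2'
      simp only [hL2cons] at this
      exact this
    have hchain2 : List.Chain D.symRel u l2 := by
      simp only [hL2cons] at hch2
      exact hch2
    exact ihn (n-2) (by omega) l2 u v (by omega) hchain2 hlast2
  · push_neg at hpk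
    have hg : ∀ j (h : j < L.length), L.getD j u = L[j]'h :=
      fun j h => List.getD_eq_getElem L u h
    have hstepg : ∀ i, i + 1 < L.length → D.symRel (L.getD i u) (L.getD (i+1) u) := by
      intro i h
      rw [hg i (by omega), hg (i+1) h]
      exact hstep i h
    have hpkg : ∀ i, i + 2 < L.length → D.site (L.getD i u) ≠ D.site (L.getD (i+2) u) := by
      intro i h
      rw [hg i (by omega), hg (i+2) h]
      exact hpk i h
    have hsadj : ∀ i, i + 1 < L.length →
        (bipGraph D.Tadj).Adj (D.site (L.getD i u)) (D.site (L.getD (i+1) u)) :=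
      fun i h => D.symRel_site_adj (hstepg i h)
    have hdist : ∀ i, i < L.length →
        (bipGraph D.Tadj).dist (D.site (L.getD 0 u)) (D.site (L.getD i u)) = i := by
      intro i
      induction i using Nat.strong_induction_on with
      | _ i ihi =>
      intro hi
      match i with
      | 0 => simp
      | 1 => exact SimpleGraph.dist_eq_one_iff_adj.mpr (hsadj 0 (by omega))
      | (k+2) =>
        have d0 := ihi k (by omega) (by omega)
        have d1 := ihi (k+1) (by omega) (by omega)
        have hadj : (bipGraph D.Tadj).Adj (D.site (L.getD (k+1) u))
            (D.site (L.getD (k+2) u)) := hsadj (k+1) (by omega)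
        have hne := tree_dist_ne hTconn Sum.isLeft (fun h => D.bip_side_flip h) hadj
          (D.site (L.getD 0 u))
        have hd12 := SimpleGraph.dist_eq_one_iff_adj.mpr hadj
        have htri1 := hTconn.dist_triangle (u := D.site (L.getD 0 u))
          (v := D.site (L.getD (k+1) u)) (w := D.site (L.getD (k+2) u))
        have htri2 := hTconn.dist_triangle (u := D.site (L.getD 0 u))
          (v := D.site (L.getD (k+2) u)) (w := D.site (L.getD (k+1) u))
        have hcomm := SimpleGraph.dist_comm (G := bipGraph D.Tadj)
          (u := D.site (L.getD (k+2) u)) (v := D.site (L.getD (k+1) u))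
        by_cases hlow : (bipGraph D.Tadj).dist (D.site (L.getD 0 u))
            (D.site (L.getD (k+2) u)) = k
        · exfalso
          apply hpkg k (by omega)
          refine (tree_unique_parent (r := D.site (L.getD 0 u)) D.isTree hadj
            ((hsadj k (by omega)).symm) ?_ ?_).symm
          · omega
          · omega
        · omega
    have hinj : ∀ i j, i < L.length → j < L.length →
        D.site (L.getD i u) = D.site (L.getD j u) → i = j := by
      intro i j hi hj hsij
      have h1 := hdist i hi
      have h2 := hdist j hj
      rw [hsij] at h1
      omega
    have hamalg := D.chain_toAmalg_eq l u hch
    have hmem : ∀ i, i < L.length → D.site (L.getD i u) ∈ D.support (D.toAmalg u) := by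
      intro i hi
      refine ⟨L.getD i u, hamalg _ ?_, rfl⟩
      rw [hg i hi]
      exact List.getElem_mem hi
    obtain ⟨hfin, hcard⟩ := hN (D.toAmalg u)
    have hLle : L.length ≤ N := by
      classical
      have hinj' : Function.Injective
          (fun i : Fin L.length => D.site (L.getD (i : ℕ) u)) := by
        intro i j hij
        exact Fin.ext (hinj i j i.2 j.2 hij)
      calc L.length = Fintype.card (Fin L.length) := (Fintype.card_fin _).symm
        _ = (Finset.univ.image
              (fun i : Fin L.length => D.site (L.getD (i : ℕ) u))).card := by
            rw [Finset.card_image_of_injective _ hinj', Finset.card_univ]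
        _ = ((Finset.univ.image
              (fun i : Fin L.length => D.site (L.getD (i : ℕ) u)) : Finset _) :
              Set (D.VT1 ⊕ D.VT2)).ncard := (Set.ncard_coe_finset _).symm
        _ ≤ (D.support (D.toAmalg u)).ncard := by
            apply Set.ncard_le_ncard _ hfin
            intro t ht
            simp only [Finset.coe_image, Finset.coe_univ, Set.image_univ,
              Set.mem_range] at ht
            obtain ⟨i, rfl⟩ := ht
            exact hmem i i.2
        _ ≤ N := hcard
    have hd := D.dist_le_chain hconn l u v hch hlast
    omega

lemma dist_le_of_toAmalg_eq (hc1 : G1.Connected) (hc2 : G2.Connected) (N : ℕ)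
    (hN : ∀ x : D.AmalgV, (D.support x).Finite ∧ (D.support x).ncard ≤ N)
    {u v : D.PlusV} (h : D.toAmalg u = D.toAmalg v) : D.plusGraph.dist u v ≤ N := by
  have h' : Quot.mk D.idRel u = Quot.mk D.idRel v := h
  have hE : Relation.EqvGen D.idRel u v := Quot.eq.mp h'
  clear h h'
  have hR : Relation.ReflTransGen D.symRel u v := by
  
    induction hE with
    | rel x y hxy => exact Relation.ReflTransGen.single (Or.inl hxy)
    | refl x => exact Relation.ReflTransGen.refl
    | symm x y hxy ih => exact (haveI : Std.Symm D.symRel := ⟨fun a b hab => Or.symm hab⟩; Std.Symm.symm _ _ ih)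
    | trans x y z h1 h2 ih1 ih2 => exact ih1.trans ih2
  obtain ⟨l, hch, hlast⟩ := List.exists_isChain_cons_of_relationReflTransGen hR
  exact D.dist_le_of_chain_bound hc1 hc2 N hN l.length l u v rfl hch hlast

lemma exists_amalg_walk : ∀ {u v : D.PlusV} (w : D.plusGraph.Walk u v),
    ∃ w' : D.amalgGraph.Walk (D.toAmalg u) (D.toAmalg v), w'.length ≤ w.length := by
  intro u v w
  induction w with
  | nil => exact ⟨Walk.nil, by simp⟩
  | @cons a b c h p ih =>
    obtain ⟨w', hw'⟩ := ih
    by_cases he : D.toAmalg a = D.toAmalg b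
    · exact ⟨w'.copy he.symm rfl, by simpa using Nat.le_succ_of_le hw'⟩
    · refine ⟨Walk.cons (D.amalg_adj_of he h) w', ?_⟩
      simp only [Walk.length_cons]
      omega

lemma amalg_dist_le (hc1 : G1.Connected) (hc2 : G2.Connected) (u v : D.PlusV) :
    D.amalgGraph.dist (D.toAmalg u) (D.toAmalg v) ≤ D.plusGraph.dist u v := by
  obtain ⟨w, hw⟩ := (D.plus_connected hc1 hc2).exists_walk_length_eq_dist u v
  obtain ⟨w', hw'⟩ := D.exists_amalg_walk w
  exact le_trans (SimpleGraph.dist_le w') (hw ▸ hw')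

lemma plus_dist_le_walk (hc1 : G1.Connected) (hc2 : G2.Connected) (N : ℕ)
    (hN : ∀ x : D.AmalgV, (D.support x).Finite ∧ (D.support x).ncard ≤ N) :
    ∀ {x y : D.AmalgV} (w : D.amalgGraph.Walk x y) (u v : D.PlusV),
      D.toAmalg u = x → D.toAmalg v = y →
      D.plusGraph.dist u v ≤ (N+1) * w.length + N := by
  have hconn := D.plus_connected hc1 hc2
  intro x y w
  induction w with
  | nil =>
    intro u v hu hv
    have := D.dist_le_of_toAmalg_eq hc1 hc2 N hN (hu.trans hv.symm)
    simpa using this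
  | @cons x m y hadj p ih =>
    intro u v hu hv
    obtain ⟨hne, hrel | hrel⟩ := D.amalg_adj_cases hadj
    · obtain ⟨a, b, hxa, hmb, hab⟩ := hrel
      have h1 : D.plusGraph.dist u a ≤ N :=
        D.dist_le_of_toAmalg_eq hc1 hc2 N hN (by rw [hu, hxa])
      have h2 : D.plusGraph.dist a b ≤ 1 :=
        le_of_eq (SimpleGraph.dist_eq_one_iff_adj.mpr hab)
      have h3 := ih b v hmb.symm hv
      calc D.plusGraph.dist u v
          ≤ D.plusGraph.dist u a + D.plusGraph.dist a v := hconn.dist_triangle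
        _ ≤ D.plusGraph.dist u a + (D.plusGraph.dist a b + D.plusGraph.dist b v) :=
            Nat.add_le_add_left hconn.dist_triangle _
        _ ≤ N + (1 + ((N+1) * p.length + N)) :=
            Nat.add_le_add h1 (Nat.add_le_add h2 h3)
        _ = (N+1) * (Walk.cons (by assumption
              : D.amalgGraph.Adj x m) p).length + N := by
            simp [Walk.length_cons]; ring
    · obtain ⟨a, b, hma, hxb, hab⟩ := hrel
      have h1 : D.plusGraph.dist u b ≤ N :=
        D.dist_le_of_toAmalg_eq hc1 hc2 N hN (by rw [hu, hxb])
      have h2 : D.plusGraph.dist b a ≤ 1 :=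
        le_of_eq (SimpleGraph.dist_eq_one_iff_adj.mpr hab.symm)
      have h3 := ih a v hma.symm hv
      calc D.plusGraph.dist u v
          ≤ D.plusGraph.dist u b + D.plusGraph.dist b v := hconn.dist_triangle
        _ ≤ D.plusGraph.dist u b + (D.plusGraph.dist b a + D.plusGraph.dist a v) :=
            Nat.add_le_add_left hconn.dist_triangle _
        _ ≤ N + (1 + ((N+1) * p.length + N)) :=
            Nat.add_le_add h1 (Nat.add_le_add h2 h3)
        _ = (N+1) * p.length + (N+1) + N := by ring
        _ = (N+1) * (p.length + 1) + N := by ring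


end TreeAmalgData

/-- **Remark.** For every bound `N` on the identification sizes there are constants `γ`, `c`
(depending only on `N`) such that for every tree amalgamation `G1 ∗_T G2` of connected
graphs all of whose vertices have identification size at most `N`, the canonical contraction
map `ψ : V(G1 + G2) → V(G1 ∗_T G2)` is a `(γ, c)`-quasi-isometry. -/
theorem contraction_quasiIsometry (N : ℕ) :
    ∃ γ c : ℝ, 1 ≤ γ ∧ 0 ≤ c ∧
      ∀ {V1 V2 : Type u} (G1 : SimpleGraph V1) (G2 : SimpleGraph V2),
        G1.Connected → G2.Connected →
        ∀ D : TreeAmalgData G1 G2,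
          (∀ x : D.AmalgV, (D.support x).Finite ∧ (D.support x).ncard ≤ N) →
          IsQIWith D.plusGraph D.amalgGraph γ c D.toAmalg := by
  refine ⟨(N : ℝ) + 1, (N : ℝ), by have := Nat.cast_nonneg (α := ℝ) N; linarith,
    Nat.cast_nonneg N, ?_⟩
  intro V1 V2 G1 G2 hc1 hc2 D hN
  have hconn := D.plus_connected hc1 hc2
  constructor
  · intro u v
    have hA : D.amalgGraph.dist (D.toAmalg u) (D.toAmalg v) ≤ D.plusGraph.dist u v :=
      D.amalg_dist_le hc1 hc2 u v
    have hB : D.plusGraph.dist u v ≤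
        (N + 1) * D.amalgGraph.dist (D.toAmalg u) (D.toAmalg v) + N := by
      obtain ⟨w0, hw0⟩ := hconn.exists_walk_length_eq_dist u v
      obtain ⟨w1, -⟩ := D.exists_amalg_walk w0
      obtain ⟨w, hw⟩ := (Walk.reachable w1).exists_walk_length_eq_dist
      have := D.plus_dist_le_walk hc1 hc2 N hN w u v rfl rfl
      rw [hw] at this
      exact this
    have hA' : (D.amalgGraph.dist (D.toAmalg u) (D.toAmalg v) : ℝ) ≤
        (D.plusGraph.dist u v : ℝ) := Nat.cast_le.mpr hA
    have hB' : (D.plusGraph.dist u v : ℝ) ≤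
        ((N : ℝ) + 1) * (D.amalgGraph.dist (D.toAmalg u) (D.toAmalg v) : ℝ) + N := by
      have := Nat.cast_le (α := ℝ).mpr hB
      push_cast at this
      linarith
    have hNn : (0 : ℝ) ≤ (N : ℝ) := Nat.cast_nonneg N
    have hda : (0 : ℝ) ≤ (D.amalgGraph.dist (D.toAmalg u) (D.toAmalg v) : ℝ) :=
      Nat.cast_nonneg _
    have hdp : (0 : ℝ) ≤ (D.plusGraph.dist u v : ℝ) := Nat.cast_nonneg _
    constructor
    · rw [sub_le_iff_le_add, inv_mul_le_iff₀ (by linarith : (0:ℝ) < (N : ℝ) + 1)]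
      nlinarith
    · nlinarith
  · intro w
    obtain ⟨x, hx⟩ := Quot.exists_rep w
    refine ⟨x, ?_⟩
    rw [show D.toAmalg x = w from hx, SimpleGraph.dist_self]
    exact_mod_cast Nat.zero_le N
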